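/- The number of oscillating tableaux (i.e., oscillating 1-rim hook tableaux) of length 2n equals (2n-1)!!. -/

import Mathlib

open Finset

/-- `lam` is obtained from `μ` by adding a single cell. -/
def IsCellAdd (μ lam : YoungDiagram) : Prop :=
  μ ≤ lam ∧ (lam.cells \ μ.cells).card = 1

/-- An oscillating tableau of length `2n`: consecutive shapes differ by one cell. -/
def IsOscTableau (n : ℕ) (T : Fin (2*n + 1) → YoungDiagram) : Prop :=
  T 0 = ⊥ ∧ T (Fin.last (2*n)) = ⊥ ∧
  ∀ i : Fin (2*n), IsCellAdd (T i.castSucc) (T i.succ) ∨ IsCellAdd (T i.succ) (T i.castSucc)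

namespace Osc

instance : DecidableEq YoungDiagram := fun μ ν =>
  decidable_of_iff (μ.cells = ν.cells) (YoungDiagram.ext_iff).symm

/-- row `i` can receive a new cell -/
def Addable (μ : YoungDiagram) (i : ℕ) : Prop :=
  i = 0 ∨ μ.rowLen i < μ.rowLen (i - 1)

instance (μ : YoungDiagram) : DecidablePred (Addable μ) := fun i => by
  unfold Addable; infer_instance

/-- row `i` can lose its last cell -/
def Removable (μ : YoungDiagram) (i : ℕ) : Prop :=
  μ.rowLen (i + 1) < μ.rowLen i

instance (μ : YoungDiagram) : DecidablePred (Removable μ) := fun i => by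
  unfold Removable; infer_instance

theorem not_mem_rowLen (μ : YoungDiagram) (i : ℕ) : (i, μ.rowLen i) ∉ μ := by
  rw [YoungDiagram.mem_iff_lt_rowLen]; exact lt_irrefl _

theorem lower_insert {μ : YoungDiagram} {i : ℕ} (h : Addable μ i) :
    IsLowerSet (↑(insert (i, μ.rowLen i) μ.cells) : Set (ℕ × ℕ)) := by
  intro ⟨a, b⟩ ⟨c, d⟩ hle hm
  simp only [Finset.coe_insert, Set.mem_insert_iff, Finset.mem_coe, YoungDiagram.mem_cells] at hm ⊢
  obtain ⟨h1, h2⟩ := Prod.mk_le_mk.mp hle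
  rcases hm with h' | h'
  · obtain rfl : i = a := (congrArg Prod.fst h').symm
    obtain rfl : μ.rowLen i = b := (congrArg Prod.snd h').symm
    rcases lt_or_eq_of_le h2 with hd | hd
    · exact Or.inr (YoungDiagram.mem_iff_lt_rowLen.mpr
        (lt_of_lt_of_le hd (μ.rowLen_anti _ _ h1)))
    · subst hd
      rcases lt_or_eq_of_le h1 with hc | hc
      · refine Or.inr (YoungDiagram.mem_iff_lt_rowLen.mpr ?_)
        rcases h with rfl | h
        · exact absurd hc (Nat.not_lt_zero c)
        · exact lt_of_lt_of_le h (μ.rowLen_anti _ _ (by omega))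
      · subst hc; exact Or.inl rfl
  · exact Or.inr (μ.up_left_mem h1 h2 h')

/-- Add a cell at the end of row `i` (identity if not addable). -/
def grow (μ : YoungDiagram) (i : ℕ) : YoungDiagram :=
  if h : Addable μ i then ⟨insert (i, μ.rowLen i) μ.cells, lower_insert h⟩ else μ

theorem grow_cells {μ : YoungDiagram} {i : ℕ} (h : Addable μ i) :
    (grow μ i).cells = insert (i, μ.rowLen i) μ.cells := by
  rw [grow, dif_pos h]

theorem lower_erase {μ : YoungDiagram} {i : ℕ} (h : Removable μ i) :
    IsLowerSet (↑(μ.cells.erase (i, μ.rowLen i - 1)) : Set (ℕ × ℕ)) := by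
  have hpos : 0 < μ.rowLen i := lt_of_le_of_lt (Nat.zero_le _) h
  intro ⟨a, b⟩ ⟨c, d⟩ hle hm
  simp only [Finset.coe_erase, Set.mem_diff, Finset.mem_coe, YoungDiagram.mem_cells,
    Set.mem_singleton_iff] at hm ⊢
  obtain ⟨h1, h2⟩ := Prod.mk_le_mk.mp hle
  refine ⟨μ.up_left_mem h1 h2 hm.1, ?_⟩
  intro hcd
  have hrem : μ.rowLen (i + 1) < μ.rowLen i := h
  have hc : c = i := congrArg Prod.fst hcd
  have hd : d = μ.rowLen i - 1 := congrArg Prod.snd hcd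
  apply hm.2
  have hb : b < μ.rowLen a := YoungDiagram.mem_iff_lt_rowLen.mp hm.1
  have h1' : i ≤ a := hc ▸ h1
  have h2' : μ.rowLen i - 1 ≤ b := hd ▸ h2
  have ha : a = i := by
    rcases lt_or_eq_of_le h1' with hlt | he
    · have h3 : μ.rowLen a ≤ μ.rowLen (i + 1) := μ.rowLen_anti _ _ hlt
      omega
    · exact he.symm
  have hbi : b < μ.rowLen i := ha ▸ hb
  rw [Prod.ext_iff]
  exact ⟨ha, by omega⟩

/-- Remove the last cell of row `i` (identity if not removable). -/
def shrink (μ : YoungDiagram) (i : ℕ) : YoungDiagram :=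
  if h : Removable μ i then ⟨μ.cells.erase (i, μ.rowLen i - 1), lower_erase h⟩ else μ

theorem shrink_cells {μ : YoungDiagram} {i : ℕ} (h : Removable μ i) :
    (shrink μ i).cells = μ.cells.erase (i, μ.rowLen i - 1) := by
  rw [shrink, dif_pos h]

/-- Diagrams covering `μ`. -/
def up (μ : YoungDiagram) : Finset YoungDiagram :=
  ((Finset.range (μ.colLen 0 + 1)).filter (Addable μ)).image (grow μ)

/-- Diagrams covered by `μ`. -/
def down (μ : YoungDiagram) : Finset YoungDiagram :=
  ((Finset.range (μ.colLen 0)).filter (Removable μ)).image (shrink μ)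

theorem mem_up {μ ν : YoungDiagram} : ν ∈ up μ ↔ IsCellAdd μ ν := by
  constructor
  · intro hν
    simp only [up, Finset.mem_image, Finset.mem_filter, Finset.mem_range] at hν
    obtain ⟨i, ⟨_, hadd⟩, rfl⟩ := hν
    have hni : (i, μ.rowLen i) ∉ μ.cells := not_mem_rowLen μ i
    refine ⟨YoungDiagram.cells_subset_iff.mp ?_, ?_⟩
    · rw [grow_cells hadd]; exact Finset.subset_insert _ _
    · rw [grow_cells hadd, Finset.insert_sdiff_cancel hni, Finset.card_singleton]
  · rintro ⟨hle, hcard⟩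
    obtain ⟨c, hc⟩ := Finset.card_eq_one.mp hcard
    have hcd : c ∈ ν.cells \ μ.cells := hc ▸ Finset.mem_singleton_self c
    have hcν : c ∈ ν.cells := (Finset.mem_sdiff.mp hcd).1
    have hcμ : c ∉ μ.cells := (Finset.mem_sdiff.mp hcd).2
    have hcells : ν.cells = insert c μ.cells := by
      ext x
      simp only [Finset.mem_insert]
      constructor
      · intro hx
        by_cases hxμ : x ∈ μ.cells
        · exact Or.inr hxμ
        · exact Or.inl (Finset.mem_singleton.mp (hc ▸ Finset.mem_sdiff.mpr ⟨hx, hxμ⟩))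
      · rintro (rfl | hx)
        · exact hcν
        · exact YoungDiagram.cells_subset_iff.mpr hle hx
    obtain ⟨i, j⟩ := c
    have hjν : (i, j) ∈ ν := hcν
    have hjμ : (i, j) ∉ μ := hcμ
    have hj : j = μ.rowLen i := by
      have h1 : μ.rowLen i ≤ j := by
        by_contra hlt
        push_neg at hlt
        exact hjμ (YoungDiagram.mem_iff_lt_rowLen.mpr hlt)
      have h2 : j ≤ μ.rowLen i := by
        rcases Nat.eq_zero_or_pos j with rfl | hj0
        · exact Nat.zero_le _
        · have hmem : (i, j - 1) ∈ ν := ν.up_left_mem le_rfl (by omega) hjν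
          have hinμ : (i, j - 1) ∈ μ := by
            have hx : (i, j - 1) ∈ ν.cells := hmem
            rw [hcells] at hx
            rcases Finset.mem_insert.mp hx with h | h
            · exact absurd (congrArg Prod.snd h) (by simp; omega)
            · exact h
          have := YoungDiagram.mem_iff_lt_rowLen.mp hinμ
          omega
      omega
    have hadd : Addable μ i := by
      rcases Nat.eq_zero_or_pos i with rfl | hi0
      · exact Or.inl rfl
      · right
        have hmem : (i - 1, j) ∈ ν := ν.up_left_mem (by omega) le_rfl hjν
        have hinμ : (i - 1, j) ∈ μ := by
          have hx : (i - 1, j) ∈ ν.cells := hmem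
          rw [hcells] at hx
          rcases Finset.mem_insert.mp hx with h | h
          · exact absurd (congrArg Prod.fst h) (by simp; omega)
          · exact h
        have := YoungDiagram.mem_iff_lt_rowLen.mp hinμ
        omega
    have hrange : i < μ.colLen 0 + 1 := by
      rcases Nat.eq_zero_or_pos i with rfl | hi0
      · omega
      · have hlt := hadd.resolve_left (by omega)
        have hmem : (i - 1, 0) ∈ μ := YoungDiagram.mem_iff_lt_rowLen.mpr (by omega)
        have := YoungDiagram.mem_iff_lt_colLen.mp hmem
        omega
    simp only [up, Finset.mem_image, Finset.mem_filter, Finset.mem_range]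
    exact ⟨i, ⟨hrange, hadd⟩, YoungDiagram.ext (by rw [grow_cells hadd, ← hj, hcells])⟩

theorem mem_down {μ ν : YoungDiagram} : ν ∈ down μ ↔ IsCellAdd ν μ := by
  constructor
  · intro hν
    simp only [down, Finset.mem_image, Finset.mem_filter, Finset.mem_range] at hν
    obtain ⟨i, ⟨_, hrem⟩, rfl⟩ := hν
    have hrem' : μ.rowLen (i + 1) < μ.rowLen i := hrem
    have hmem : (i, μ.rowLen i - 1) ∈ μ.cells :=
      YoungDiagram.mem_iff_lt_rowLen.mpr (by omega)
    refine ⟨YoungDiagram.cells_subset_iff.mp ?_, ?_⟩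
    · rw [shrink_cells hrem]; exact Finset.erase_subset _ _
    · rw [shrink_cells hrem, Finset.sdiff_erase_self hmem, Finset.card_singleton]
  · rintro ⟨hle, hcard⟩
    obtain ⟨c, hc⟩ := Finset.card_eq_one.mp hcard
    have hcd : c ∈ μ.cells \ ν.cells := hc ▸ Finset.mem_singleton_self c
    have hcμ : c ∈ μ.cells := (Finset.mem_sdiff.mp hcd).1
    have hcν : c ∉ ν.cells := (Finset.mem_sdiff.mp hcd).2
    have hcells : ν.cells = μ.cells.erase c := by
      ext x
      simp only [Finset.mem_erase]
      constructor
      · intro hx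
        refine ⟨fun hxc => hcν (hxc ▸ hx), YoungDiagram.cells_subset_iff.mpr hle hx⟩
      · rintro ⟨hxc, hx⟩
        by_contra hxν
        exact hxc (Finset.mem_singleton.mp (hc ▸ Finset.mem_sdiff.mpr ⟨hx, hxν⟩))
    obtain ⟨i, j⟩ := c
    have hjμ : (i, j) ∈ μ := hcμ
    have hjltr : j < μ.rowLen i := YoungDiagram.mem_iff_lt_rowLen.mp hjμ
    have hνmem : ∀ x : ℕ × ℕ, x ∈ μ → x ≠ (i, j) → x ∈ ν := by
      intro x hx hne
      show x ∈ ν.cells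
      rw [hcells]
      exact Finset.mem_erase.mpr ⟨hne, hx⟩
    have hij1 : (i, j + 1) ∉ μ := by
      intro hmem
      have : (i, j + 1) ∈ ν := hνmem _ hmem (by simp)
      exact hcν (ν.up_left_mem le_rfl (by omega) this)
    have hi1j : (i + 1, j) ∉ μ := by
      intro hmem
      have : (i + 1, j) ∈ ν := hνmem _ hmem (by simp)
      exact hcν (ν.up_left_mem (by omega) le_rfl this)
    have hj : j = μ.rowLen i - 1 := by
      have := YoungDiagram.mem_iff_lt_rowLen.not.mp hij1
      omega
    have hrem : Removable μ i := by
      show μ.rowLen (i + 1) < μ.rowLen i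
      have := YoungDiagram.mem_iff_lt_rowLen.not.mp hi1j
      omega
    have hrange : i < μ.colLen 0 :=
      YoungDiagram.mem_iff_lt_colLen.mp (μ.up_left_mem le_rfl (Nat.zero_le _) hjμ)
    simp only [down, Finset.mem_image, Finset.mem_filter, Finset.mem_range]
    refine ⟨i, ⟨hrange, hrem⟩, YoungDiagram.ext ?_⟩
    rw [shrink_cells hrem, ← hj, hcells]

theorem cellAdd_card {μ ν : YoungDiagram} (h : IsCellAdd μ ν) :
    ν.cells.card = μ.cells.card + 1 := by
  have hsub : μ.cells ⊆ ν.cells := YoungDiagram.cells_subset_iff.mpr h.1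
  have h1 := Finset.card_sdiff_of_subset hsub
  have h2 := Finset.card_le_card hsub
  have h3 := h.2
  omega

/-- the key "differential poset" condition, off-diagonal case -/
def Cond (lam nu : YoungDiagram) : Prop :=
  (lam.cells ∪ nu.cells).card = lam.cells.card + 1 ∧ nu.cells.card = lam.cells.card

theorem mem_up_inter {lam nu mu : YoungDiagram} (h : lam ≠ nu) :
    mu ∈ up lam ∩ up nu ↔ Cond lam nu ∧ mu = lam ⊔ nu := by
  constructor
  · intro hm
    obtain ⟨h1, h2⟩ := Finset.mem_inter.mp hm
    have a1 := mem_up.mp h1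
    have a2 := mem_up.mp h2
    have c1 := cellAdd_card a1
    have c2 := cellAdd_card a2
    have hsub : lam.cells ∪ nu.cells ⊆ mu.cells :=
      Finset.union_subset (YoungDiagram.cells_subset_iff.mpr a1.1)
        (YoungDiagram.cells_subset_iff.mpr a2.1)
    have hne : lam.cells ∪ nu.cells ≠ lam.cells := by
      intro h'
      have hsub2 : nu.cells ⊆ lam.cells := by
        rw [← h']; exact Finset.subset_union_right
      exact h (YoungDiagram.ext (Finset.eq_of_subset_of_card_le hsub2 (by omega)).symm)
    have hgt : lam.cells.card < (lam.cells ∪ nu.cells).card :=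
      Finset.card_lt_card (Finset.ssubset_iff_subset_ne.mpr ⟨Finset.subset_union_left, hne.symm⟩)
    have hle2 : (lam.cells ∪ nu.cells).card ≤ mu.cells.card := Finset.card_le_card hsub
    have hcu : (lam.cells ∪ nu.cells).card = lam.cells.card + 1 := by omega
    refine ⟨⟨hcu, by omega⟩, YoungDiagram.ext ?_⟩
    rw [YoungDiagram.cells_sup]
    exact (Finset.eq_of_subset_of_card_le hsub (by omega)).symm
  · rintro ⟨⟨hu, hc⟩, rfl⟩
    have hcs : (lam ⊔ nu).cells = lam.cells ∪ nu.cells := YoungDiagram.cells_sup lam nu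
    refine Finset.mem_inter.mpr ⟨mem_up.mpr ⟨le_sup_left, ?_⟩, mem_up.mpr ⟨le_sup_right, ?_⟩⟩
    · rw [hcs, Finset.card_sdiff_of_subset Finset.subset_union_left, hu]
      omega
    · rw [hcs, Finset.card_sdiff_of_subset Finset.subset_union_right, hu]
      omega

theorem mem_down_inter {lam nu mu : YoungDiagram} (h : lam ≠ nu) :
    mu ∈ down lam ∩ down nu ↔ Cond lam nu ∧ mu = lam ⊓ nu := by
  have huai := Finset.card_union_add_card_inter lam.cells nu.cells
  constructor
  · intro hm
    obtain ⟨h1, h2⟩ := Finset.mem_inter.mp hm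
    have a1 := mem_down.mp h1
    have a2 := mem_down.mp h2
    have c1 := cellAdd_card a1
    have c2 := cellAdd_card a2
    have hsub : mu.cells ⊆ lam.cells ∩ nu.cells :=
      Finset.subset_inter (YoungDiagram.cells_subset_iff.mpr a1.1)
        (YoungDiagram.cells_subset_iff.mpr a2.1)
    have hne : lam.cells ∩ nu.cells ≠ lam.cells := by
      intro h'
      have hsub2 : lam.cells ⊆ nu.cells := by
        rw [← h']; exact Finset.inter_subset_right
      exact h (YoungDiagram.ext (Finset.eq_of_subset_of_card_le hsub2 (by omega)))
    have hlt : (lam.cells ∩ nu.cells).card < lam.cells.card :=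
      Finset.card_lt_card (Finset.ssubset_iff_subset_ne.mpr ⟨Finset.inter_subset_left, hne⟩)
    have hle2 : mu.cells.card ≤ (lam.cells ∩ nu.cells).card := Finset.card_le_card hsub
    refine ⟨⟨by omega, by omega⟩, YoungDiagram.ext ?_⟩
    rw [YoungDiagram.cells_inf]
    exact Finset.eq_of_subset_of_card_le hsub (by omega)
  · rintro ⟨⟨hu, hc⟩, rfl⟩
    have hcs : (lam ⊓ nu).cells = lam.cells ∩ nu.cells := YoungDiagram.cells_inf lam nu
    refine Finset.mem_inter.mpr ⟨mem_down.mpr ⟨inf_le_left, ?_⟩, mem_down.mpr ⟨inf_le_right, ?_⟩⟩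
    · rw [hcs, Finset.card_sdiff_of_subset Finset.inter_subset_left]
      omega
    · rw [hcs, Finset.card_sdiff_of_subset Finset.inter_subset_right]
      omega

theorem card_up_inter {lam nu : YoungDiagram} (h : lam ≠ nu) :
    (up lam ∩ up nu).card = (down lam ∩ down nu).card := by
  by_cases hC : Cond lam nu
  · have e1 : up lam ∩ up nu = {lam ⊔ nu} := by
      ext mu; rw [mem_up_inter h, Finset.mem_singleton]; tauto
    have e2 : down lam ∩ down nu = {lam ⊓ nu} := by
      ext mu; rw [mem_down_inter h, Finset.mem_singleton]; tauto
    rw [e1, e2]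
    simp
  · have e1 : up lam ∩ up nu = ∅ := by
      ext mu; rw [mem_up_inter h]; simp [hC]
    have e2 : down lam ∩ down nu = ∅ := by
      ext mu; rw [mem_down_inter h]; simp [hC]
    rw [e1, e2]

theorem grow_injOn (μ : YoungDiagram) :
    Set.InjOn (grow μ) ((Finset.range (μ.colLen 0 + 1)).filter (Addable μ)) := by
  intro i hi i' hi' he
  simp only [Finset.coe_filter, Set.mem_setOf_eq, Finset.mem_range] at hi hi'
  have m1 : (i, μ.rowLen i) ∈ (grow μ i).cells := by
    rw [grow_cells hi.2]; exact Finset.mem_insert_self _ _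
  rw [he, grow_cells hi'.2] at m1
  rcases Finset.mem_insert.mp m1 with h' | h'
  · exact congrArg Prod.fst h'
  · exact absurd h' (not_mem_rowLen μ i)

theorem shrink_injOn (μ : YoungDiagram) :
    Set.InjOn (shrink μ) ((Finset.range (μ.colLen 0)).filter (Removable μ)) := by
  intro i hi i' hi' he
  simp only [Finset.coe_filter, Set.mem_setOf_eq, Finset.mem_range] at hi hi'
  by_contra hne
  have hr : μ.rowLen (i + 1) < μ.rowLen i := hi.2
  have m1 : (i, μ.rowLen i - 1) ∈ μ.cells := YoungDiagram.mem_iff_lt_rowLen.mpr (by omega)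
  have m2 : (i, μ.rowLen i - 1) ∉ (shrink μ i).cells := by
    rw [shrink_cells hi.2]; exact Finset.notMem_erase _ _
  apply m2
  rw [he, shrink_cells hi'.2]
  exact Finset.mem_erase.mpr ⟨fun h' => hne (congrArg Prod.fst h'), m1⟩

theorem card_up_eq (μ : YoungDiagram) : (up μ).card = (down μ).card + 1 := by
  have h1 : (up μ).card = ((Finset.range (μ.colLen 0 + 1)).filter (Addable μ)).card :=
    Finset.card_image_of_injOn (grow_injOn μ)
  have h2 : (down μ).card = ((Finset.range (μ.colLen 0)).filter (Removable μ)).card :=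
    Finset.card_image_of_injOn (shrink_injOn μ)
  have h3 : (Finset.range (μ.colLen 0 + 1)).filter (Addable μ) =
      insert 0 (((Finset.range (μ.colLen 0)).filter (Removable μ)).image (· + 1)) := by
    ext i
    simp only [Finset.mem_filter, Finset.mem_range, Finset.mem_insert, Finset.mem_image]
    constructor
    · rintro ⟨hir, hadd⟩
      rcases Nat.eq_zero_or_pos i with rfl | hpos
      · exact Or.inl rfl
      · rcases hadd with h0 | hlt
        · exact Or.inl h0
        · refine Or.inr ⟨i - 1, ⟨?_, ?_⟩, by omega⟩
          · have hpos2 : 0 < μ.rowLen (i - 1) := by omega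
            have : (i - 1, 0) ∈ μ := YoungDiagram.mem_iff_lt_rowLen.mpr hpos2
            exact YoungDiagram.mem_iff_lt_colLen.mp this
          · show μ.rowLen (i - 1 + 1) < μ.rowLen (i - 1)
            have he : i - 1 + 1 = i := by omega
            rw [he]; exact hlt
    · rintro (rfl | ⟨k, hk, rfl⟩)
      · exact ⟨by omega, Or.inl rfl⟩
      · obtain ⟨hkr, hrem⟩ := hk
        refine ⟨by omega, Or.inr ?_⟩
        show μ.rowLen (k + 1) < μ.rowLen (k + 1 - 1)
        exact hrem
  rw [h1, h2, h3, Finset.card_insert_of_notMem (by simp),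
    Finset.card_image_of_injective _ (add_left_injective 1)]

theorem bot_not_mem_up (μ : YoungDiagram) : (⊥ : YoungDiagram) ∉ up μ := by
  intro h
  have := cellAdd_card (mem_up.mp h)
  simp at this

theorem down_bot : down (⊥ : YoungDiagram) = ∅ := by
  ext ν
  simp only [Finset.notMem_empty, iff_false]
  intro h
  have := cellAdd_card (mem_down.mp h)
  simp at this

theorem up_down_disjoint (μ : YoungDiagram) : Disjoint (down μ) (up μ) := by
  rw [Finset.disjoint_left]
  intro ν h1 h2
  have c1 := cellAdd_card (mem_down.mp h1)
  have c2 := cellAdd_card (mem_up.mp h2)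
  omega

/-! ### The up/down operators on the free module -/

noncomputable def uvec (lam : YoungDiagram) : YoungDiagram →₀ ℕ :=
  ∑ μ ∈ up lam, Finsupp.single μ 1

noncomputable def dvec (lam : YoungDiagram) : YoungDiagram →₀ ℕ :=
  ∑ μ ∈ down lam, Finsupp.single μ 1

theorem coeff_sum (s : Finset YoungDiagram) (ν : YoungDiagram) :
    (∑ μ ∈ s, Finsupp.single μ (1 : ℕ)) ν = if ν ∈ s then 1 else 0 := by
  rw [Finsupp.finset_sum_apply]
  rw [Finset.sum_congr rfl (fun μ _ => Finsupp.single_apply)]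
  rw [Finset.sum_ite_eq' s ν (fun _ => 1)]

noncomputable def Uop : (YoungDiagram →₀ ℕ) →ₗ[ℕ] (YoungDiagram →₀ ℕ) :=
  Finsupp.lsum ℕ fun lam => LinearMap.toSpanSingleton ℕ _ (uvec lam)

noncomputable def Dop : (YoungDiagram →₀ ℕ) →ₗ[ℕ] (YoungDiagram →₀ ℕ) :=
  Finsupp.lsum ℕ fun lam => LinearMap.toSpanSingleton ℕ _ (dvec lam)

theorem Uop_single (lam : YoungDiagram) (b : ℕ) :
    Uop (Finsupp.single lam b) = b • uvec lam := by
  simp [Uop, LinearMap.toSpanSingleton_apply]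

theorem Dop_single (lam : YoungDiagram) (b : ℕ) :
    Dop (Finsupp.single lam b) = b • dvec lam := by
  simp [Dop, LinearMap.toSpanSingleton_apply]

theorem mem_up_iff_mem_down {lam μ : YoungDiagram} : μ ∈ up lam ↔ lam ∈ down μ := by
  rw [mem_up, mem_down]

theorem Uop_apply (x : YoungDiagram →₀ ℕ) (μ : YoungDiagram) :
    (Uop x) μ = ∑ lam ∈ down μ, x lam := by
  induction x using Finsupp.induction_linear with
  | zero => simp
  | add f g hf hg => simp [hf, hg, Finset.sum_add_distrib]
  | single lam b =>
    rw [Uop_single, Finsupp.smul_apply,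
      show (uvec lam) μ = if μ ∈ up lam then 1 else 0 from coeff_sum _ _,
      Finset.sum_congr rfl (fun ρ _ => Finsupp.single_apply),
      Finset.sum_ite_eq (down μ) lam fun _ => b]
    by_cases h : lam ∈ down μ
    · rw [if_pos h, if_pos (mem_up_iff_mem_down.mpr h), smul_eq_mul, mul_one]
    · rw [if_neg h, if_neg (fun hc => h (mem_up_iff_mem_down.mp hc)), smul_eq_mul, mul_zero]

theorem Dop_apply (x : YoungDiagram →₀ ℕ) (μ : YoungDiagram) :
    (Dop x) μ = ∑ lam ∈ up μ, x lam := by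
  induction x using Finsupp.induction_linear with
  | zero => simp
  | add f g hf hg => simp [hf, hg, Finset.sum_add_distrib]
  | single lam b =>
    rw [Dop_single, Finsupp.smul_apply,
      show (dvec lam) μ = if μ ∈ down lam then 1 else 0 from coeff_sum _ _,
      Finset.sum_congr rfl (fun ρ _ => Finsupp.single_apply),
      Finset.sum_ite_eq (up μ) lam fun _ => b]
    by_cases h : lam ∈ up μ
    · rw [if_pos h, if_pos (mem_up_iff_mem_down.mp h), smul_eq_mul, mul_one]
    · rw [if_neg h, if_neg (fun hc => h (mem_up_iff_mem_down.mpr hc)), smul_eq_mul, mul_zero]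

theorem uvec_apply (lam ν : YoungDiagram) : (uvec lam) ν = if ν ∈ up lam then 1 else 0 :=
  coeff_sum _ _

theorem dvec_apply (lam ν : YoungDiagram) : (dvec lam) ν = if ν ∈ down lam then 1 else 0 :=
  coeff_sum _ _

theorem comm (x : YoungDiagram →₀ ℕ) : Dop (Uop x) = Uop (Dop x) + x := by
  induction x using Finsupp.induction_linear with
  | zero => simp
  | add f g hf hg =>
    rw [map_add, map_add, map_add, map_add, hf, hg]
    abel
  | single lam b =>
    ext ν
    have L : (Dop (Uop (Finsupp.single lam b))) ν = b * (up ν ∩ up lam).card := by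
      rw [Uop_single, map_smul, Finsupp.smul_apply, Dop_apply,
        Finset.sum_congr rfl fun mu _ => uvec_apply lam mu,
        Finset.sum_ite_mem, Finset.sum_const]
      simp [mul_comm]
    have R : (Uop (Dop (Finsupp.single lam b))) ν = b * (down ν ∩ down lam).card := by
      rw [Dop_single, map_smul, Finsupp.smul_apply, Uop_apply,
        Finset.sum_congr rfl fun mu _ => dvec_apply lam mu,
        Finset.sum_ite_mem, Finset.sum_const]
      simp [mul_comm]
    rw [Finsupp.add_apply, L, R, Finsupp.single_apply]
    by_cases h : lam = ν
    · subst h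
      rw [if_pos rfl, Finset.inter_self, Finset.inter_self, card_up_eq]
      ring
    · rw [if_neg h, card_up_inter (fun he => h he.symm)]
      exact (add_zero _).symm

/-- the walk vector: coefficients count paths of length `k` from `⊥`. -/
noncomputable def wv : ℕ → (YoungDiagram →₀ ℕ)
  | 0 => Finsupp.single ⊥ 1
  | (k + 1) => Uop (wv k) + Dop (wv k)

theorem dvec_bot : dvec (⊥ : YoungDiagram) = 0 := by
  rw [dvec, down_bot, Finset.sum_empty]

theorem Dop_w0 : Dop (wv 0) = 0 := by
  rw [wv, Dop_single, dvec_bot, smul_zero]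

theorem Dop_w : ∀ k, Dop (wv (k + 1)) = (k + 1) • wv k := by
  intro k
  induction k with
  | zero =>
    show Dop (Uop (wv 0) + Dop (wv 0)) = 1 • wv 0
    rw [map_add, comm, Dop_w0, map_zero, map_zero, one_smul]
    simp
  | succ k ih =>
    show Dop (Uop (wv (k + 1)) + Dop (wv (k + 1))) = (k + 2) • wv (k + 1)
    rw [map_add, comm, ih, map_smul, map_smul,
      show ((k + 2) : ℕ) • wv (k + 1) = (k + 1) • wv (k + 1) + wv (k + 1) from succ_nsmul _ _,
      show ((k + 1) : ℕ) • wv (k + 1) = (k + 1) • Uop (wv k) + (k + 1) • Dop (wv k) from by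
        rw [← smul_add]; rfl]
    abel

theorem Uop_bot (x : YoungDiagram →₀ ℕ) : (Uop x) ⊥ = 0 := by
  rw [Uop_apply, down_bot, Finset.sum_empty]

theorem w_bot_even (n : ℕ) : wv (2 * n) ⊥ = ∏ i ∈ Finset.range n, (2 * i + 1) := by
  induction n with
  | zero => simp [wv]
  | succ n ih =>
    have h1 : 2 * (n + 1) = (2 * n + 1) + 1 := by ring
    rw [h1, show wv ((2 * n + 1) + 1) = Uop (wv (2 * n + 1)) + Dop (wv (2 * n + 1)) from rfl,
      Finsupp.add_apply, Uop_bot, Dop_w, Finsupp.smul_apply, ih, Finset.prod_range_succ,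
      zero_add, smul_eq_mul]
    ring

/-! ### Counting paths -/

def IsPath (k : ℕ) (μ : YoungDiagram) (T : Fin (k + 1) → YoungDiagram) : Prop :=
  T 0 = ⊥ ∧ T (Fin.last k) = μ ∧
  ∀ i : Fin k, IsCellAdd (T i.castSucc) (T i.succ) ∨ IsCellAdd (T i.succ) (T i.castSucc)

theorem last_mem {k : ℕ} {μ : YoungDiagram} {T : Fin (k + 2) → YoungDiagram}
    (h : IsPath (k + 1) μ T) : T (Fin.castSucc (Fin.last k)) ∈ down μ ∪ up μ := by
  have hs := h.2.2 (Fin.last k)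
  rw [Fin.succ_last, h.2.1] at hs
  rcases hs with hs | hs
  · exact Finset.mem_union_left _ (mem_down.mpr hs)
  · exact Finset.mem_union_right _ (mem_up.mpr hs)

theorem init_path {k : ℕ} {μ : YoungDiagram} {T : Fin (k + 2) → YoungDiagram}
    (h : IsPath (k + 1) μ T) : IsPath k (T (Fin.castSucc (Fin.last k))) (T ∘ Fin.castSucc) := by
  refine ⟨by simpa using h.1, rfl, fun i => ?_⟩
  have hs := h.2.2 i.castSucc
  rwa [Fin.succ_castSucc] at hs

theorem snoc_path {k : ℕ} {μ ν : YoungDiagram} (hν : ν ∈ down μ ∪ up μ)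
    {T : Fin (k + 1) → YoungDiagram} (h : IsPath k ν T) :
    IsPath (k + 1) μ (Fin.snoc T μ) := by
  refine ⟨?_, Fin.snoc_last _ _, fun i => ?_⟩
  · rw [show (0 : Fin (k + 2)) = Fin.castSucc 0 from rfl, Fin.snoc_castSucc]
    exact h.1
  · induction i using Fin.lastCases with
    | last =>
      rw [Fin.succ_last, Fin.snoc_last, Fin.snoc_castSucc, h.2.1]
      rcases Finset.mem_union.mp hν with h' | h'
      · exact Or.inl (mem_down.mp h')
      · exact Or.inr (mem_up.mp h')
    | cast j =>
      rw [Fin.succ_castSucc, Fin.snoc_castSucc, Fin.snoc_castSucc]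
      exact h.2.2 j

/-- Splitting off the last step of a path. -/
noncomputable def stepEquiv (k : ℕ) (μ : YoungDiagram) :
    {T : Fin (k + 2) → YoungDiagram // IsPath (k + 1) μ T} ≃
    (Σ ν : ((down μ ∪ up μ : Finset YoungDiagram) : Type),
      {T : Fin (k + 1) → YoungDiagram // IsPath k (↑ν) T}) where
  toFun T := ⟨⟨T.1 (Fin.castSucc (Fin.last k)), last_mem T.2⟩, ⟨T.1 ∘ Fin.castSucc, init_path T.2⟩⟩
  invFun p := ⟨Fin.snoc p.2.1 μ, snoc_path p.1.2 p.2.2⟩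
  left_inv T := by
    apply Subtype.ext
    show Fin.snoc (T.1 ∘ Fin.castSucc) μ = T.1
    funext i
    induction i using Fin.lastCases with
    | last => rw [Fin.snoc_last, T.2.2.1]
    | cast j => rw [Fin.snoc_castSucc]; rfl
  right_inv p := by
    obtain ⟨ν, T⟩ := p
    have h1 : Fin.snoc (α := fun _ : Fin (k + 2) => YoungDiagram) T.1 μ (Fin.castSucc (Fin.last k)) = (ν : YoungDiagram) := by
      rw [Fin.snoc_castSucc]
      exact T.2.2.1
    refine Sigma.ext (Subtype.ext h1) ?_
    refine (Subtype.heq_iff_coe_eq ?_).mpr ?_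
    · intro x
      exact iff_of_eq (congrArg (fun z => IsPath k z x) h1)
    · show (Fin.snoc T.1 μ) ∘ Fin.castSucc = T.1
      funext j
      exact Fin.snoc_castSucc _ _ _

theorem path_count (k : ℕ) : ∀ (μ : YoungDiagram),
    Finite {T : Fin (k + 1) → YoungDiagram // IsPath k μ T} ∧
    Nat.card {T : Fin (k + 1) → YoungDiagram // IsPath k μ T} = wv k μ := by
  induction k with
  | zero =>
    intro μ
    by_cases h : μ = ⊥
    · subst h
      have hU : ∀ T : {T : Fin 1 → YoungDiagram // IsPath 0 ⊥ T}, T.1 = fun _ => ⊥ := by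
        intro T
        funext i
        rw [Subsingleton.elim i 0, T.2.1]
      letI : Unique {T : Fin 1 → YoungDiagram // IsPath 0 ⊥ T} :=
        { default := ⟨fun _ => ⊥, ⟨rfl, rfl, fun i => i.elim0⟩⟩,
          uniq := fun T => Subtype.ext (hU T) }
      refine ⟨inferInstance, ?_⟩
      rw [Nat.card_unique, show wv 0 ⊥ = 1 from by simp [wv]]
    · haveI hE : IsEmpty {T : Fin 1 → YoungDiagram // IsPath 0 μ T} := by
        constructor
        rintro ⟨T, h0, hlast, _⟩
        apply h
        rw [← hlast, show Fin.last 0 = 0 from rfl, h0]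
      refine ⟨inferInstance, ?_⟩
      rw [Nat.card_of_isEmpty, show wv 0 = Finsupp.single ⊥ 1 from rfl,
        Finsupp.single_apply, if_neg (fun hb => h hb.symm)]
  | succ k ih =>
    intro μ
    haveI hfin : ∀ ν : ((down μ ∪ up μ : Finset YoungDiagram) : Type),
        Finite {T : Fin (k + 1) → YoungDiagram // IsPath k (↑ν) T} := fun ν => (ih ↑ν).1
    refine ⟨Finite.of_equiv _ (stepEquiv k μ).symm, ?_⟩
    letI : ∀ ν : ((down μ ∪ up μ : Finset YoungDiagram) : Type),
        Fintype {T : Fin (k + 1) → YoungDiagram // IsPath k (↑ν) T} :=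
      fun ν => Fintype.ofFinite _
    rw [Nat.card_congr (stepEquiv k μ), Nat.card_eq_fintype_card, Fintype.card_sigma]
    have he : ∀ ν : ((down μ ∪ up μ : Finset YoungDiagram) : Type),
        Fintype.card {T : Fin (k + 1) → YoungDiagram // IsPath k (↑ν) T} = wv k ↑ν := fun ν => by
      rw [← Nat.card_eq_fintype_card, (ih ↑ν).2]
    rw [Finset.sum_congr rfl (fun ν _ => he ν),
      Finset.sum_coe_sort (down μ ∪ up μ) (wv k),
      Finset.sum_union (up_down_disjoint μ),
      show wv (k + 1) = Uop (wv k) + Dop (wv k) from rfl,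
      Finsupp.add_apply, Uop_apply, Dop_apply]

end Osc

/-- The number of oscillating tableaux of length `2n` is `(2n-1)!! = 1·3·5⋯(2n-1)`. -/
theorem stmt4 (n : ℕ) :
    Nat.card {T : Fin (2*n + 1) → YoungDiagram // IsOscTableau n T} =
      ∏ i ∈ Finset.range n, (2 * i + 1) := by
  have h1 : Nat.card {T : Fin (2 * n + 1) → YoungDiagram // IsOscTableau n T} =
      Nat.card {T : Fin (2 * n + 1) → YoungDiagram // Osc.IsPath (2 * n) ⊥ T} := rfl
  rw [h1, (Osc.path_count (2 * n) ⊥).2, Osc.w_bot_even n]
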